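/- (Case 1 of Lemma 3) Let y ∈ C³[0,1] satisfy |y^{(k)}(x)| ≤ C₀ ε^{−k} e^{−βx/ε} for k = 0,1,2,3 and x ∈ [0,1], where β > 0 and C₀ > 0. Then there exist ε₀ > 0 and C > 0, depending only on a, q, β, C₀ and max|b|, max|c|, such that on the VB-mesh, for all 0 < ε ≤ ε₀, all N ≥ 2, and all indices i with J+1 ≤ i ≤ N−1, the consistency error satisfies |τ_i[y]| ≤ C N^{−1}. -/

import Mathlib

/-- `ψ(t) = aεt/(q−t)`, the Bakhvalov mesh-generating function on the fine part. -/
noncomputable def psi (a ε q t : ℝ) : ℝ := a * ε * t / (q - t)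

/-- `ψ′(t) = aεq/(q−t)²`. -/
noncomputable def psi' (a ε q t : ℝ) : ℝ := a * ε * q / (q - t) ^ 2

/-- The transition parameter `α = (q − √(aεq(1−q+aε)))/(1+aε)` of the VB-mesh. -/
noncomputable def alph (a ε q : ℝ) : ℝ :=
  (q - Real.sqrt (a * ε * q * (1 - q + a * ε))) / (1 + a * ε)

/-- The mesh-generating function `λ`: `ψ` on `[0,α]`, its tangent line on `[α,1]`. -/
noncomputable def lam (a ε q t : ℝ) : ℝ :=
  if t ≤ alph a ε q then psi a ε q t
  else psi a ε q (alph a ε q) + psi' a ε q (alph a ε q) * (t - alph a ε q)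

/-- VB-mesh points `x_i = λ(i/N)`. -/
noncomputable def meshx (a ε q : ℝ) (N i : ℕ) : ℝ := lam a ε q ((i : ℝ) / (N : ℝ))

/-- Mesh steps `h_i = x_i − x_{i−1}`. -/
noncomputable def meshh (a ε q : ℝ) (N i : ℕ) : ℝ :=
  meshx a ε q N i - meshx a ε q N (i - 1)

/-- Averaged mesh steps `h̄_i = (h_i + h_{i+1})/2`. -/
noncomputable def meshhb (a ε q : ℝ) (N i : ℕ) : ℝ :=
  (meshh a ε q N i + meshh a ε q N (i + 1)) / 2

/-- The coarse (uniform) step `H = ψ′(α)/N` of the VB-mesh. -/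
noncomputable def bigH (a ε q : ℝ) (N : ℕ) : ℝ := psi' a ε q (alph a ε q) / N
/-- The consistency error `τ_i[u]` of the upwind scheme at an interior mesh point. -/
noncomputable def tau (b c : ℝ → ℝ) (ε : ℝ) (x : ℕ → ℝ) (u : ℝ → ℝ) (i : ℕ) : ℝ :=
  let h : ℕ → ℝ := fun k => x k - x (k - 1)
  let hb : ℝ := (h i + h (i + 1)) / 2
  let D1 : ℝ := (u (x (i + 1)) - u (x i)) / h (i + 1)
  let D2 : ℝ := ((u (x (i + 1)) - u (x i)) / h (i + 1) - (u (x i) - u (x (i - 1))) / h i) / hb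
  (-ε * D2 - b (x i) * D1 + c (x i) * u (x i)) -
    (-ε * iteratedDeriv 2 u (x i) - b (x i) * deriv u (x i) + c (x i) * u (x i))

section Helpers
open Set
lemma itDW_eq (y : ℝ → ℝ) (hy : ContDiff ℝ 3 y) {p r : ℝ} (hpr : p < r) (n : ℕ) (hn : n ≤ 3)
    {x : ℝ} (hx : x ∈ Icc p r) :
    iteratedDerivWithin n y (Icc p r) x = iteratedDeriv n y x := by
  induction n generalizing x with
  | zero => simp
  | succ m ih =>
    have hm3 : m ≤ 3 := by omega
    have hud : UniqueDiffOn ℝ (Icc p r) := uniqueDiffOn_Icc hpr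
    rw [iteratedDerivWithin_succ]
    have hEq : Set.EqOn (iteratedDerivWithin m y (Icc p r)) (iteratedDeriv m y) (Icc p r) :=
      fun t ht => ih hm3 ht
    rw [derivWithin_congr hEq (hEq hx)]
    have hdiff : DifferentiableAt ℝ (iteratedDeriv m y) x := by
      have : (m : WithTop ℕ∞) < 3 := by exact_mod_cast (by omega : m < 3)
      exact (hy.differentiable_iteratedDeriv m this) x
    rw [hdiff.derivWithin (hud x hx)]
    rw [iteratedDeriv_succ]

lemma taylor_est (y : ℝ → ℝ) (hy : ContDiff ℝ 3 y) {p r M : ℝ} (hpr : p < r)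
    {x : ℝ} (hx : x ∈ Icc p r) (hM : ∀ t ∈ Icc p r, |iteratedDeriv 3 y t| ≤ M) :
    |y x - (y p + deriv y p * (x - p) + iteratedDeriv 2 y p * (x - p) ^ 2 / 2)| ≤
      M * (x - p) ^ 3 / 2 := by
  have hp : p ∈ Icc p r := left_mem_Icc.2 hpr.le
  have hbd := taylor_mean_remainder_bound (n := 2) hpr.le (hy.contDiffOn) hx
    (fun t ht => by
      rw [Real.norm_eq_abs, itDW_eq y hy hpr 3 le_rfl ht]; exact hM t ht)
  rw [taylor_within_apply] at hbd
  simp only [Finset.sum_range_succ, Finset.sum_range_zero] at hbd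
  rw [itDW_eq y hy hpr 0 (by omega) hp, itDW_eq y hy hpr 1 (by omega) hp,
    itDW_eq y hy hpr 2 (by omega) hp] at hbd
  simp only [iteratedDeriv_zero, iteratedDeriv_one, Real.norm_eq_abs, smul_eq_mul,
    Nat.factorial, pow_one, pow_zero] at hbd
  norm_num at hbd
  have e : y p + deriv y p * (x - p) + iteratedDeriv 2 y p * (x - p) ^ 2 / 2 =
      y p + (x - p) * deriv y p + 2⁻¹ * (x - p) ^ 2 * iteratedDeriv 2 y p := by ring
  rw [e]
  have e2 : M * (x - p) ^ 3 / 2 = M * (x - p) ^ 3 / 2 := rfl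
  convert hbd using 2
  norm_num

lemma mvt_est (y : ℝ → ℝ) (hy : ContDiff ℝ 3 y) {p r M : ℝ} (k : ℕ) (hk : k < 3)
    {x : ℝ} (hx : x ∈ Icc p r)
    (hM : ∀ t ∈ Icc p r, |iteratedDeriv (k+1) y t| ≤ M) :
    |iteratedDeriv k y x - iteratedDeriv k y p| ≤ M * (x - p) := by
  have hp : p ∈ Icc p r := ⟨le_refl p, hx.1.trans hx.2⟩
  have hdiff : ∀ t ∈ Icc p r, DifferentiableAt ℝ (iteratedDeriv k y) t := by
    intro t _
    have : (k : WithTop ℕ∞) < 3 := by exact_mod_cast hk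
    exact (hy.differentiable_iteratedDeriv k this) t
  have hbd : ∀ t ∈ Icc p r, ‖deriv (iteratedDeriv k y) t‖ ≤ M := by
    intro t ht
    rw [← iteratedDeriv_succ, Real.norm_eq_abs]
    exact hM t ht
  have := (convex_Icc p r).norm_image_sub_le_of_norm_deriv_le hdiff hbd hp hx
  rw [Real.norm_eq_abs, Real.norm_eq_abs] at this
  calc |iteratedDeriv k y x - iteratedDeriv k y p| ≤ M * |x - p| := this
    _ = M * (x - p) := by rw [abs_of_nonneg (by linarith [hx.1])]


lemma tau_eq (b c : ℝ → ℝ) (ε : ℝ) (x : ℕ → ℝ) (u : ℝ → ℝ) (i : ℕ) :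
    tau b c ε x u i =
      (-ε * (((u (x (i + 1)) - u (x i)) / (x (i + 1) - x i) -
          (u (x i) - u (x (i - 1))) / (x i - x (i - 1))) /
        (((x i - x (i - 1)) + (x (i + 1) - x i)) / 2))
        - b (x i) * ((u (x (i + 1)) - u (x i)) / (x (i + 1) - x i))
        + c (x i) * u (x i)) -
      (-ε * iteratedDeriv 2 u (x i) - b (x i) * deriv u (x i) + c (x i) * u (x i)) := rfl

lemma aux_alph (q a ε : ℝ) (hq0 : 0 < q) (hq1 : q < 1) (ha : 0 < a) (hε : 0 < ε)
    (haεq : a * ε < q) :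
    0 < alph a ε q ∧ 0 < q - alph a ε q ∧
      psi a ε q (alph a ε q) + psi' a ε q (alph a ε q) * (1 - alph a ε q) = 1 ∧
      psi' a ε q (alph a ε q) ≤ (1 + q) ^ 2 / (1 - q) := by
  set s := Real.sqrt (a * ε * q * (1 - q + a * ε)) with hsdef
  have haε : 0 < a * ε := mul_pos ha hε
  have h1qa : 0 < 1 - q + a * ε := by linarith
  have hs2 : s ^ 2 = a * ε * q * (1 - q + a * ε) := Real.sq_sqrt (by positivity)
  have hs0 : 0 < s := Real.sqrt_pos.mpr (by positivity)
  have h1aε : (0 : ℝ) < 1 + a * ε := by linarith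
  have halph : alph a ε q = (q - s) / (1 + a * ε) := rfl
  have hsltq : s < q := by
    have e1 : a * ε * q * (1 - q + a * ε) < a * ε * q := by nlinarith [mul_pos haε hq0]
    have e2 : a * ε * q < q ^ 2 := by nlinarith [hq0]
    have h : s ^ 2 < q ^ 2 := by rw [hs2]; linarith
    nlinarith [h, hs0]
  have hqα : q - alph a ε q = (a * ε * q + s) / (1 + a * ε) := by
    rw [halph]; field_simp; ring
  have hqαpos : 0 < q - alph a ε q := by rw [hqα]; positivity
  have hα0 : 0 < alph a ε q := by rw [halph]; exact div_pos (by linarith) h1aε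
  have hkey : a * ε * alph a ε q * (q - alph a ε q) + a * ε * q * (1 - alph a ε q)
      = (q - alph a ε q) ^ 2 := by
    rw [halph]
    field_simp
    linear_combination (-(1 + a * ε)) * hs2
  refine ⟨hα0, hqαpos, ?_, ?_⟩
  · show a * ε * alph a ε q / (q - alph a ε q)
        + a * ε * q / (q - alph a ε q) ^ 2 * (1 - alph a ε q) = 1
    have hd : q - alph a ε q ≠ 0 := ne_of_gt hqαpos
    field_simp
    linear_combination hkey
  · show a * ε * q / (q - alph a ε q) ^ 2 ≤ (1 + q) ^ 2 / (1 - q)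
    rw [div_le_div_iff₀ (by positivity) (by linarith)]
    have h1 : (q - alph a ε q) ^ 2 * (1 + a * ε) ^ 2 = (a * ε * q + s) ^ 2 := by
      rw [hqα]; field_simp
    have d2 : (0:ℝ) ≤ (q - alph a ε q) ^ 2 := sq_nonneg _
    have step1 : (1 + a * ε) ^ 2 ≤ (1 + q) ^ 2 := by nlinarith [haεq, haε]
    have step2 : (1 + a * ε) ^ 2 * (q - alph a ε q) ^ 2 ≤ (1 + q) ^ 2 * (q - alph a ε q) ^ 2 :=
      mul_le_mul_of_nonneg_right step1 d2
    have step3 : s ^ 2 ≤ (a * ε * q + s) ^ 2 := by nlinarith [mul_pos haε hq0, hs0]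
    have step4 : a * ε * q * (1 - q) ≤ s ^ 2 := by rw [hs2]; nlinarith [mul_pos haε hq0]
    nlinarith [h1, step2, step3, step4]

lemma aux_alph2 (q a ε : ℝ) (hq0 : 0 < q) (hq1 : q < 1) (ha : 0 < a) (hε : 0 < ε)
    (haεq : a * ε < q) (h16 : a * ε ≤ q / 16) (h1q : a * ε * q ≤ 1) :
    q / 2 ≤ alph a ε q ∧ q - alph a ε q ≤ 2 * (Real.sqrt (a * q) * Real.sqrt ε) := by
  set s := Real.sqrt (a * ε * q * (1 - q + a * ε)) with hsdef
  have haε : 0 < a * ε := mul_pos ha hε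
  have h1qa : 0 < 1 - q + a * ε := by linarith
  have hs2 : s ^ 2 = a * ε * q * (1 - q + a * ε) := Real.sq_sqrt (by positivity)
  have hs0 : 0 < s := Real.sqrt_pos.mpr (by positivity)
  have h1aε : (0 : ℝ) < 1 + a * ε := by linarith
  have halph : alph a ε q = (q - s) / (1 + a * ε) := rfl
  have hqα : q - alph a ε q = (a * ε * q + s) / (1 + a * ε) := by
    rw [halph]; field_simp; ring
  have hsplit : Real.sqrt (a * ε * q) = Real.sqrt (a * q) * Real.sqrt ε := by
    rw [show a * ε * q = (a * q) * ε by ring, Real.sqrt_mul (by positivity)]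
  have hsqrt1 : s ≤ Real.sqrt (a * ε * q) := by
    apply Real.sqrt_le_sqrt
    nlinarith [mul_pos haε hq0]
  have hsqrt2 : a * ε * q ≤ Real.sqrt (a * ε * q) := by
    have h := Real.sqrt_le_sqrt (show (a * ε * q) ^ 2 ≤ a * ε * q by
      nlinarith [mul_pos haε hq0])
    rwa [Real.sqrt_sq (by positivity)] at h
  have hsqrt3 : Real.sqrt (a * ε * q) ≤ q / 4 := by
    have h : a * ε * q ≤ (q / 4) ^ 2 := by nlinarith [hq0]
    calc Real.sqrt (a * ε * q) ≤ Real.sqrt ((q / 4) ^ 2) := Real.sqrt_le_sqrt h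
      _ = q / 4 := Real.sqrt_sq (by positivity)
  have hqα2 : q - alph a ε q ≤ 2 * Real.sqrt (a * ε * q) := by
    rw [hqα, div_le_iff₀ h1aε]
    nlinarith [hsqrt1, hsqrt2, Real.sqrt_nonneg (a * ε * q), haε]
  constructor
  · nlinarith [hqα2, hsqrt3]
  · rw [← hsplit]; exact hqα2

lemma exp_est {c u : ℝ} (hc : 0 < c) (hu : 0 < u) :
    u ^ 6 * Real.exp (-(c * u)) ≤ (6 / c) ^ 6 := by
  have h2 : (c * u / 6) ^ 6 ≤ Real.exp (c * u) := by
    calc (c * u / 6) ^ 6 ≤ (c * u / 6 + 1) ^ 6 := by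
          apply pow_le_pow_left₀ (by positivity); linarith
      _ ≤ Real.exp (c * u / 6) ^ 6 := by
          apply pow_le_pow_left₀ (by positivity)
          linarith [Real.add_one_le_exp (c * u / 6)]
      _ = Real.exp (c * u) := by
          rw [← Real.exp_nat_mul]; congr 1; push_cast; ring
  have key : u ^ 6 ≤ (6 / c) ^ 6 * Real.exp (c * u) := by
    calc u ^ 6 = (6 / c) ^ 6 * (c * u / 6) ^ 6 := by field_simp
      _ ≤ (6 / c) ^ 6 * Real.exp (c * u) := mul_le_mul_of_nonneg_left h2 (by positivity)
  rw [Real.exp_neg, ← div_eq_mul_inv, div_le_iff₀ (Real.exp_pos _)]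
  exact key

/-- The layer factor `ε⁻³ e^{−βp/ε}` is bounded on the coarse region. -/
lemma aux_exp (q a ε β p : ℝ) (hq0 : 0 < q) (hq1 : q < 1) (ha : 0 < a) (hε : 0 < ε)
    (hβ : 0 < β) (haεq : a * ε < q) (h16 : a * ε ≤ q / 16) (h1q : a * ε * q ≤ 1)
    (hp : psi a ε q (alph a ε q) ≤ p) :
    1 / ε ^ 3 * Real.exp (-β * p / ε) ≤ (6 / (β * Real.sqrt (a * q) / 4)) ^ 6 := by
  obtain ⟨hα2, hqα2⟩ := aux_alph2 q a ε hq0 hq1 ha hε haεq h16 h1q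
  obtain ⟨hα0, hqαpos, -, -⟩ := aux_alph q a ε hq0 hq1 ha hε haεq
  set cβ := β * Real.sqrt (a * q) / 4 with hcβdef
  have hsqaq : 0 < Real.sqrt (a * q) := Real.sqrt_pos.mpr (by positivity)
  have hsqaq2 : Real.sqrt (a * q) ^ 2 = a * q := Real.sq_sqrt (by positivity)
  have hcβ0 : 0 < cβ := by positivity
  set u := (Real.sqrt ε)⁻¹ with hudef
  have hsε : 0 < Real.sqrt ε := Real.sqrt_pos.mpr hε
  have hu : 0 < u := by positivity
  have hsq : Real.sqrt ε ^ 2 = ε := Real.sq_sqrt hε.le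
  have hu6 : u ^ 6 = 1 / ε ^ 3 := by
    rw [hudef, inv_pow, show (6:ℕ) = 2 * 3 from rfl, pow_mul, hsq, one_div]
  have huε : u * Real.sqrt ε = 1 := inv_mul_cancel₀ (ne_of_gt hsε)
  -- main inequality : cβ * u ≤ β * p / ε
  have hmain : cβ * (q - alph a ε q) ≤ β * a * alph a ε q * Real.sqrt ε := by
    have e1 : cβ * (2 * (Real.sqrt (a * q) * Real.sqrt ε)) = β * (a * q) * Real.sqrt ε / 2 := by
      rw [hcβdef]; linear_combination (β * Real.sqrt ε / 2) * hsqaq2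
    have e2 : cβ * (q - alph a ε q) ≤ cβ * (2 * (Real.sqrt (a * q) * Real.sqrt ε)) :=
      mul_le_mul_of_nonneg_left hqα2 hcβ0.le
    have e3 : β * (a * q) * Real.sqrt ε / 2 ≤ β * a * alph a ε q * Real.sqrt ε := by
      have : β * a * Real.sqrt ε * (q / 2) ≤ β * a * Real.sqrt ε * alph a ε q :=
        mul_le_mul_of_nonneg_left hα2 (by positivity)
      nlinarith [this]
    linarith [e1 ▸ e2]
  have hPε : β * psi a ε q (alph a ε q) / ε = β * a * alph a ε q / (q - alph a ε q) := by
    show β * (a * ε * alph a ε q / (q - alph a ε q)) / ε = _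
    field_simp
  have hcu : cβ * u ≤ β * p / ε := by
    have h1 : cβ * u ≤ β * a * alph a ε q / (q - alph a ε q) := by
      rw [le_div_iff₀ hqαpos]
      calc cβ * u * (q - alph a ε q) = cβ * (q - alph a ε q) * u := by ring
        _ ≤ (β * a * alph a ε q * Real.sqrt ε) * u := mul_le_mul_of_nonneg_right hmain hu.le
        _ = β * a * alph a ε q * (u * Real.sqrt ε) := by ring
        _ = β * a * alph a ε q := by rw [huε, mul_one]
    have h2 : β * psi a ε q (alph a ε q) / ε ≤ β * p / ε := by
      gcongr
    rw [← hPε] at h1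
    linarith
  have hexp : Real.exp (-β * p / ε) ≤ Real.exp (-(cβ * u)) := by
    apply Real.exp_le_exp.mpr
    have : -β * p / ε = -(β * p / ε) := by ring
    rw [this]
    linarith
  calc 1 / ε ^ 3 * Real.exp (-β * p / ε) = u ^ 6 * Real.exp (-β * p / ε) := by rw [hu6]
    _ ≤ u ^ 6 * Real.exp (-(cβ * u)) := mul_le_mul_of_nonneg_left hexp (by positivity)
    _ ≤ (6 / cβ) ^ 6 := exp_est hcβ0 hu

lemma abs_comb1 {X Y Z1 Z2 H M2 M3 : ℝ} (hH : 0 < H) (hM2 : 0 ≤ M2) (hM3 : 0 ≤ M3)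
    (h1 : |X| ≤ M2 * H) (h2 : |Y| ≤ M2) (h3 : |Z1| ≤ M3 * H ^ 3 / 2)
    (h4 : |Z2| ≤ M3 * (2 * H) ^ 3 / 2) :
    |X + (3 / 2) * H * Y + (Z2 - Z1) / H| ≤ (5 / 2) * H * M2 + (9 / 2) * H ^ 2 * M3 := by
  have t5 : |(3 / 2) * H * Y| ≤ (3 / 2) * H * M2 := by
    rw [abs_mul, abs_of_nonneg (by positivity : (0:ℝ) ≤ (3 / 2) * H)]
    exact mul_le_mul_of_nonneg_left h2 (by positivity)
  have t4 : |Z2 - Z1| ≤ M3 * (2 * H) ^ 3 / 2 + M3 * H ^ 3 / 2 := by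
    calc |Z2 - Z1| ≤ |Z2| + |Z1| := abs_sub _ _
      _ ≤ _ := by linarith
  have t3 : |(Z2 - Z1) / H| ≤ (9 / 2) * H ^ 2 * M3 := by
    rw [abs_div, abs_of_pos hH, div_le_iff₀ hH]
    nlinarith [t4]
  calc |X + (3 / 2) * H * Y + (Z2 - Z1) / H|
      ≤ |X + (3 / 2) * H * Y| + |(Z2 - Z1) / H| := abs_add_le _ _
    _ ≤ |X| + |(3 / 2) * H * Y| + |(Z2 - Z1) / H| := by linarith [abs_add_le X ((3 / 2) * H * Y)]
    _ ≤ (5 / 2) * H * M2 + (9 / 2) * H ^ 2 * M3 := by linarith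

lemma abs_comb2 {X Z1 Z2 H M3 : ℝ} (hH : 0 < H) (hM3 : 0 ≤ M3)
    (h1 : |X| ≤ M3 * H) (h3 : |Z1| ≤ M3 * H ^ 3 / 2) (h4 : |Z2| ≤ M3 * (2 * H) ^ 3 / 2) :
    |X + (Z2 - 2 * Z1) / H ^ 2| ≤ 6 * H * M3 := by
  have t4 : |Z2 - 2 * Z1| ≤ M3 * (2 * H) ^ 3 / 2 + M3 * H ^ 3 := by
    calc |Z2 - 2 * Z1| ≤ |Z2| + |2 * Z1| := abs_sub _ _
      _ = |Z2| + 2 * |Z1| := by rw [abs_mul]; norm_num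
      _ ≤ _ := by linarith
  have t3 : |(Z2 - 2 * Z1) / H ^ 2| ≤ 5 * H * M3 := by
    rw [abs_div, abs_of_pos (by positivity : (0:ℝ) < H ^ 2), div_le_iff₀ (by positivity)]
    nlinarith [t4]
  calc |X + (Z2 - 2 * Z1) / H ^ 2| ≤ |X| + |(Z2 - 2 * Z1) / H ^ 2| := abs_add_le _ _
    _ ≤ 6 * H * M3 := by linarith

set_option maxHeartbeats 1000000 in
lemma final_bound {τv ε H M2 M3 B' K c6 N C₀ EE bx : ℝ}
    (hε : 0 < ε) (hε1 : ε ≤ 1) (hH : 0 < H) (hN : 1 ≤ N)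
    (hM2 : M2 = C₀ / ε ^ 2 * EE) (hM3 : M3 = C₀ / ε ^ 3 * EE) (hEE : 0 < EE) (hC₀ : 0 < C₀)
    (hHK : H * N ≤ K) (hK : 0 < K) (hB' : 1 ≤ B') (hbx : |bx| ≤ B')
    (hexp : 1 / ε ^ 3 * EE ≤ c6) (hc6 : 0 < c6)
    (hA2 : |(-ε) * A2| ≤ ε * (6 * H * M3)) (hA1b : |bx * A1| ≤ B' * ((5 / 2) * H * M2 + (9 / 2) * H ^ 2 * M3))
    (hτ : |τv| ≤ |(-ε) * A2| + |bx * A1|) :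
    |τv| ≤ (K * C₀ * (B' + 1) * (100 + 100 * K) * c6 + 1) / N := by
  have hN0' : (0:ℝ) < N := by linarith
  have hεM3 : ε * M3 = M2 := by rw [hM2, hM3]; field_simp
  have hM30 : 0 < M3 := by rw [hM3]; positivity
  have hM2M3 : M2 ≤ M3 := by
    rw [hM2, hM3]
    have h : C₀ / ε ^ 2 ≤ C₀ / ε ^ 3 := by
      apply div_le_div_of_nonneg_left hC₀.le (by positivity)
      nlinarith
    exact mul_le_mul_of_nonneg_right h hEE.le
  have hHK' : H ≤ K := by nlinarith
  have s1 : ε * (6 * H * M3) = 6 * H * M2 := by rw [← hεM3]; ring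
  have s2 : 6 * H * M2 ≤ 6 * H * M3 := by
    have := mul_le_mul_of_nonneg_left hM2M3 (by positivity : (0:ℝ) ≤ 6 * H); linarith
  have s3 : H ^ 2 * M3 ≤ H * K * M3 := by
    nlinarith [mul_nonneg (mul_nonneg (sub_nonneg.mpr hHK') hH.le) hM30.le]
  have s5 : B' * ((5/2) * H * M2 + (9/2) * H ^ 2 * M3)
      ≤ B' * ((5/2) * H * M3 + (9/2) * (H * K) * M3) := by
    apply mul_le_mul_of_nonneg_left ?_ (by linarith)
    have h : H * M2 ≤ H * M3 := mul_le_mul_of_nonneg_left hM2M3 hH.le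
    linarith [s3, h]
  have s4 : |τv| ≤ H * M3 * (6 + B' * (5/2 + (9/2) * K)) := by linarith [hτ, hA2, hA1b, s1, s2, s5]
  have hfac : (0:ℝ) ≤ 6 + B' * (5/2 + (9/2) * K) := by nlinarith [hB', hK]
  have s6 : |τv| * N ≤ H * N * (M3 * (6 + B' * (5/2 + (9/2) * K))) := by
    have := mul_le_mul_of_nonneg_right s4 hN0'.le
    nlinarith [this]
  have s7 : H * N * (M3 * (6 + B' * (5/2 + (9/2) * K)))
      ≤ K * (M3 * (6 + B' * (5/2 + (9/2) * K))) :=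
    mul_le_mul_of_nonneg_right hHK (mul_nonneg hM30.le hfac)
  have s8 : M3 ≤ C₀ * c6 := by
    rw [hM3]
    calc C₀ / ε ^ 3 * EE = C₀ * (1 / ε ^ 3 * EE) := by ring
      _ ≤ C₀ * c6 := mul_le_mul_of_nonneg_left hexp hC₀.le
  have s9 : K * (M3 * (6 + B' * (5/2 + (9/2) * K)))
      ≤ K * (C₀ * c6 * (6 + B' * (5/2 + (9/2) * K))) :=
    mul_le_mul_of_nonneg_left (mul_le_mul_of_nonneg_right s8 hfac) hK.le
  have inner : 6 + B' * (5/2 + (9/2) * K) ≤ (B' + 1) * (100 + 100 * K) := by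
    nlinarith [hB', hK]
  have s10 : (K * C₀ * c6) * (6 + B' * (5/2 + (9/2) * K))
      ≤ (K * C₀ * c6) * ((B' + 1) * (100 + 100 * K)) :=
    mul_le_mul_of_nonneg_left inner (by positivity)
  rw [le_div_iff₀ hN0']
  nlinarith [s6, s7, s9, s10]


end Helpers

section MainProof
open Set
set_option maxHeartbeats 1000000 in
/-- Case 1 of Lemma 3: for the layer component `y` with
`|y⁽ᵏ⁾(x)| ≤ C₀ ε⁻ᵏ e^{−βx/ε}`, on the coarse part of the VB-mesh
(`J+1 ≤ i ≤ N−1`) the consistency error satisfies `|τ_i[y]| ≤ C N⁻¹`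
for all sufficiently small `ε`. -/
theorem stmt_16 (q a β C₀ : ℝ) (hq0 : 0 < q) (hq1 : q < 1) (ha : 0 < a) (hβ : 0 < β)
    (hC₀ : 0 < C₀) (b c : ℝ → ℝ)
    (hb : ContinuousOn b (Set.Icc 0 1)) (hc : ContinuousOn c (Set.Icc 0 1))
    (hbl : ∀ t ∈ Set.Icc (0 : ℝ) 1, β ≤ b t)
    (hcl : ∀ t ∈ Set.Icc (0 : ℝ) 1, 0 ≤ c t) :
    ∃ ε₀ C : ℝ, 0 < ε₀ ∧ 0 < C ∧
      ∀ (ε : ℝ) (N J : ℕ) (y : ℝ → ℝ), 0 < ε → ε ≤ ε₀ → a * ε < q → 2 ≤ N →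
        1 ≤ J → J < N →
        ((J : ℝ) - 1) / (N : ℝ) < alph a ε q → alph a ε q ≤ (J : ℝ) / (N : ℝ) →
        ContDiff ℝ 3 y →
        (∀ k : ℕ, k ≤ 3 → ∀ t ∈ Set.Icc (0 : ℝ) 1,
          |iteratedDeriv k y t| ≤ C₀ / ε ^ k * Real.exp (-β * t / ε)) →
        ∀ i : ℕ, J + 1 ≤ i → i + 1 ≤ N →
          |tau b c ε (meshx a ε q N) y i| ≤ C / (N : ℝ) := by
  obtain ⟨B, hB⟩ := (isCompact_Icc : IsCompact (Set.Icc (0:ℝ) 1)).exists_bound_of_continuousOn hb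
  set B' : ℝ := max B 1 with hB'def
  have hB'1 : (1:ℝ) ≤ B' := le_max_right _ _
  set K : ℝ := (1 + q) ^ 2 / (1 - q) with hKdef
  have hK : 0 < K := div_pos (by positivity) (by linarith)
  set cβ : ℝ := β * Real.sqrt (a * q) / 4 with hcβdef
  have hsqaq0 : 0 < Real.sqrt (a * q) := Real.sqrt_pos.mpr (by positivity)
  have hcβ : 0 < cβ := by rw [hcβdef]; positivity
  have h6cβ : 0 < (6 / cβ) ^ 6 := by positivity
  refine ⟨min (q / (16 * a)) (min (1 / (a * q)) 1),
    K * C₀ * (B' + 1) * (100 + 100 * K) * (6 / cβ) ^ 6 + 1, by positivity, ?_, ?_⟩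
  · have h1 : (0:ℝ) < B' + 1 := by linarith
    have h2 : (0:ℝ) < 100 + 100 * K := by linarith
    have := mul_pos (mul_pos (mul_pos (mul_pos hK hC₀) h1) h2) h6cβ
    linarith
  intro ε N J y hε hεε₀ haεq hN2 hJ1 hJN hJα hαJ hy hyk i hiJ hiN
  have hN0 : (0:ℝ) < N := by
    have : (2:ℝ) ≤ N := by exact_mod_cast hN2
    linarith
  have hN1 : (1:ℝ) ≤ N := by
    have : (2:ℝ) ≤ N := by exact_mod_cast hN2
    linarith
  have hNne : (N:ℝ) ≠ 0 := ne_of_gt hN0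
  have hi1 : 1 ≤ i := by omega
  have hcast : ((i - 1 : ℕ) : ℝ) = (i : ℝ) - 1 := by
    rw [Nat.cast_sub hi1, Nat.cast_one]
  have hεmin1 : ε ≤ q / (16 * a) := le_trans hεε₀ (min_le_left _ _)
  have hεmin2 : ε ≤ 1 / (a * q) := le_trans hεε₀ ((min_le_right _ _).trans (min_le_left _ _))
  have hε1 : ε ≤ 1 := le_trans hεε₀ ((min_le_right _ _).trans (min_le_right _ _))
  have haε : 0 < a * ε := mul_pos ha hε
  have haε16 : a * ε ≤ q / 16 := by
    have h := mul_le_mul_of_nonneg_left hεmin1 ha.le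
    calc a * ε ≤ a * (q / (16 * a)) := h
      _ = q / 16 := by field_simp
  have haεq1 : a * ε * q ≤ 1 := by
    have h := mul_le_mul_of_nonneg_left hεmin2 ha.le
    have h2 : a * ε * q ≤ a * (1 / (a * q)) * q :=
      mul_le_mul_of_nonneg_right h hq0.le
    calc a * ε * q ≤ a * (1 / (a * q)) * q := h2
      _ = 1 := by field_simp
  obtain ⟨hα0, hqαpos, htan, hψ'leK⟩ := aux_alph q a ε hq0 hq1 ha hε haεq
  -- mesh structure
  have hlin : ∀ t : ℝ, alph a ε q ≤ t →
      lam a ε q t = psi a ε q (alph a ε q) + psi' a ε q (alph a ε q) * (t - alph a ε q) := by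
    intro t ht
    unfold lam
    split_ifs with h
    · have heq : t = alph a ε q := le_antisymm h ht
      rw [heq]; ring
    · rfl
  have hJle : (J:ℝ) ≤ (i:ℝ) - 1 := by
    have : ((J:ℝ) + 1) ≤ (i:ℝ) := by exact_mod_cast hiJ
    linarith
  have hile : (i:ℝ) - 1 ≤ (i:ℝ) := by linarith
  have htim : alph a ε q ≤ ((i:ℝ) - 1) / N := le_trans hαJ (by gcongr)
  have hti : alph a ε q ≤ (i:ℝ) / N := le_trans htim (by gcongr)
  have htip : alph a ε q ≤ ((i:ℝ) + 1) / N := le_trans hti (by gcongr; linarith)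
  have htip1 : ((i:ℝ) + 1) / N ≤ 1 := by
    rw [div_le_one hN0]
    exact_mod_cast hiN
  have hψ'pos : 0 < psi' a ε q (alph a ε q) := by
    show 0 < a * ε * q / (q - alph a ε q) ^ 2
    positivity
  have hψ0 : 0 ≤ psi a ε q (alph a ε q) := by
    show 0 ≤ a * ε * alph a ε q / (q - alph a ε q)
    positivity
  set W : ℝ := psi' a ε q (alph a ε q) with hWdef
  set P : ℝ := psi a ε q (alph a ε q) with hPdef
  set H : ℝ := W / N with hHdef
  have hHpos : 0 < H := div_pos hψ'pos hN0
  have hHne : H ≠ 0 := ne_of_gt hHpos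
  have hxim : meshx a ε q N (i - 1) = P + W * (((i:ℝ) - 1) / N - alph a ε q) := by
    unfold meshx
    rw [hcast, hlin _ htim]
  have hxi : meshx a ε q N i = P + W * ((i:ℝ) / N - alph a ε q) := by
    unfold meshx; rw [hlin _ hti]
  have hxip : meshx a ε q N (i + 1) = P + W * (((i:ℝ) + 1) / N - alph a ε q) := by
    unfold meshx
    rw [show (((i + 1 : ℕ)):ℝ) = (i:ℝ) + 1 by push_cast; ring, hlin _ htip]
  set p : ℝ := meshx a ε q N (i - 1) with hpdef
  have hxi_eq : meshx a ε q N i = p + H := by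
    rw [hxi, hxim, hHdef]; field_simp; ring
  have hxip_eq : meshx a ε q N (i + 1) = p + 2 * H := by
    rw [hxip, hxim, hHdef]; field_simp; ring
  have hpr : p < p + 2 * H := by linarith
  have hpP : P ≤ p := by
    rw [hxim]
    have h1 : 0 ≤ ((i:ℝ) - 1) / N - alph a ε q := by linarith [htim]
    have h2 := mul_nonneg hψ'pos.le h1
    linarith [h2]
  have hp0 : 0 ≤ p := le_trans hψ0 hpP
  have hr1 : p + 2 * H ≤ 1 := by
    rw [← hxip_eq, hxip]
    have h1 : W * (((i:ℝ) + 1) / N - alph a ε q) ≤ W * (1 - alph a ε q) := by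
      apply mul_le_mul_of_nonneg_left ?_ hψ'pos.le
      linarith [htip1]
    linarith [htan]
  have hsub : Icc p (p + 2 * H) ⊆ Icc (0:ℝ) 1 := Icc_subset_Icc hp0 hr1
  -- derivative bounds
  set EE : ℝ := Real.exp (-β * p / ε) with hEEdef
  have hEE0 : 0 < EE := Real.exp_pos _
  set M2 : ℝ := C₀ / ε ^ 2 * EE with hM2def
  set M3 : ℝ := C₀ / ε ^ 3 * EE with hM3def
  have hMono : ∀ t ∈ Icc p (p + 2 * H), Real.exp (-β * t / ε) ≤ EE := by
    intro t ht
    rw [hEEdef]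
    apply Real.exp_le_exp.mpr
    have h0 : β * p ≤ β * t := mul_le_mul_of_nonneg_left ht.1 hβ.le
    have h1 : β * p / ε ≤ β * t / ε := by gcongr
    calc -β * t / ε = -(β * t / ε) := by ring
      _ ≤ -(β * p / ε) := by linarith
      _ = -β * p / ε := by ring
  have hM3b : ∀ t ∈ Icc p (p + 2 * H), |iteratedDeriv 3 y t| ≤ M3 := by
    intro t ht
    calc |iteratedDeriv 3 y t| ≤ C₀ / ε ^ 3 * Real.exp (-β * t / ε) :=
          hyk 3 le_rfl t (hsub ht)
      _ ≤ M3 := by rw [hM3def]; exact mul_le_mul_of_nonneg_left (hMono t ht) (by positivity)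
  have hM2b : ∀ t ∈ Icc p (p + 2 * H), |iteratedDeriv 2 y t| ≤ M2 := by
    intro t ht
    calc |iteratedDeriv 2 y t| ≤ C₀ / ε ^ 2 * Real.exp (-β * t / ε) :=
          hyk 2 (by omega) t (hsub ht)
      _ ≤ M2 := by rw [hM2def]; exact mul_le_mul_of_nonneg_left (hMono t ht) (by positivity)
  have hM20 : 0 ≤ M2 := by rw [hM2def]; positivity
  have hM30 : 0 ≤ M3 := by rw [hM3def]; positivity
  -- Taylor / MVT estimates
  have hxiIcc : p + H ∈ Icc p (p + 2 * H) := ⟨by linarith, by linarith⟩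
  have hrIcc : p + 2 * H ∈ Icc p (p + 2 * H) := ⟨by linarith, le_rfl⟩
  have hT1 : |y (p + H) - (y p + deriv y p * H + iteratedDeriv 2 y p * H ^ 2 / 2)| ≤
      M3 * H ^ 3 / 2 := by
    have h := taylor_est y hy hpr hxiIcc hM3b
    rw [show p + H - p = H by ring] at h
    exact h
  have hT2 : |y (p + 2 * H) - (y p + deriv y p * (2 * H) +
      iteratedDeriv 2 y p * (2 * H) ^ 2 / 2)| ≤ M3 * (2 * H) ^ 3 / 2 := by
    have h := taylor_est y hy hpr hrIcc hM3b
    rw [show p + 2 * H - p = 2 * H by ring] at h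
    exact h
  have hMV2 : |iteratedDeriv 2 y (p + H) - iteratedDeriv 2 y p| ≤ M3 * H := by
    have h := mvt_est y hy 2 (by norm_num) hxiIcc hM3b
    rw [show p + H - p = H by ring] at h
    exact h
  have hMV1 : |deriv y (p + H) - deriv y p| ≤ M2 * H := by
    have h := mvt_est y hy 1 (by norm_num) hxiIcc (fun t ht => hM2b t ht)
    rw [show p + H - p = H by ring, iteratedDeriv_one] at h
    exact h
  have hy2p : |iteratedDeriv 2 y p| ≤ M2 := hM2b p ⟨le_rfl, by linarith⟩
  -- assemble tau
  set R1 : ℝ := y (p + H) - (y p + deriv y p * H + iteratedDeriv 2 y p * H ^ 2 / 2) with hR1def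
  set R2 : ℝ := y (p + 2 * H) - (y p + deriv y p * (2 * H) +
      iteratedDeriv 2 y p * (2 * H) ^ 2 / 2) with hR2def
  set A1 : ℝ := (y (p + 2 * H) - y (p + H)) / H - deriv y (p + H) with hA1def
  set A2 : ℝ := (y (p + 2 * H) - 2 * y (p + H) + y p) / H ^ 2 -
      iteratedDeriv 2 y (p + H) with hA2def
  have htv : tau b c ε (meshx a ε q N) y i = -ε * A2 - b (p + H) * A1 := by
    rw [tau_eq, hxi_eq, hxip_eq]
    rw [show p + 2 * H - (p + H) = H by ring, show p + H - p = H by ring,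
      show (H + H) / 2 = H by ring]
    rw [hA2def, hA1def]
    field_simp
    ring
  have eA1 : A1 = (deriv y p - deriv y (p + H)) + (3 / 2) * H * iteratedDeriv 2 y p +
      (R2 - R1) / H := by
    rw [hA1def, hR1def, hR2def]
    field_simp
    ring
  have eA2 : A2 = (iteratedDeriv 2 y p - iteratedDeriv 2 y (p + H)) +
      (R2 - 2 * R1) / H ^ 2 := by
    rw [hA2def, hR1def, hR2def]
    field_simp
    ring
  have hA1b : |A1| ≤ (5 / 2) * H * M2 + (9 / 2) * H ^ 2 * M3 := by
    rw [eA1]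
    exact abs_comb1 hHpos hM20 hM30 (by rw [abs_sub_comm]; exact hMV1) hy2p hT1 hT2
  have hA2b : |A2| ≤ 6 * H * M3 := by
    rw [eA2]
    exact abs_comb2 hHpos hM30 (by rw [abs_sub_comm]; exact hMV2) hT1 hT2
  -- final combination
  have hbx : |b (p + H)| ≤ B' := by
    have h := hB (p + H) (hsub hxiIcc)
    rw [Real.norm_eq_abs] at h
    exact le_trans h (le_max_left _ _)
  have hA2f : |(-ε) * A2| ≤ ε * (6 * H * M3) := by
    rw [abs_mul, abs_neg, abs_of_pos hε]
    exact mul_le_mul_of_nonneg_left hA2b hε.le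
  have hA1f : |b (p + H) * A1| ≤ B' * ((5 / 2) * H * M2 + (9 / 2) * H ^ 2 * M3) := by
    rw [abs_mul]
    exact mul_le_mul hbx hA1b (abs_nonneg _) (by linarith)
  have hτtri : |tau b c ε (meshx a ε q N) y i| ≤ |(-ε) * A2| + |b (p + H) * A1| := by
    rw [htv]
    exact abs_sub _ _
  have hHK : H * N ≤ K := by
    have hHW : H * N = W := by rw [hHdef]; field_simp
    rw [hHW, hWdef, hKdef]
    exact hψ'leK
  have hexpb : 1 / ε ^ 3 * EE ≤ (6 / cβ) ^ 6 := by
    rw [hEEdef, hcβdef]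
    exact aux_exp q a ε β p hq0 hq1 ha hε hβ haεq haε16 haεq1 hpP
  exact final_bound hε hε1 hHpos hN1 hM2def hM3def hEE0 hC₀ hHK hK hB'1 hbx hexpb h6cβ
    hA2f hA1f hτtri
end MainProof
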